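/- Let A ∈ ℝ^{d×n} have full column rank, let b ∈ ℝ^d, let R₀ ∈ ℝ^{n×n} be an invertible upper triangular matrix, set Q₀ = A·R₀⁻¹, let R₁ ∈ ℝ^{n×n} be an invertible upper triangular matrix with R₁ᵀ·R₁ = Q₀ᵀ·Q₀, and set R = R₁·R₀. Then the vector x = R⁻¹·R₁⁻ᵀ·Q₀ᵀ·b satisfies the normal equations Aᵀ·A·x = Aᵀ·b, and consequently x minimizes ‖b − Aw‖₂ over all w ∈ ℝ^n. In exact arithmetic this establishes the correctness of the rand_cholQR least squares solver. -/

import Mathlib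

open Matrix

/-- The image of `A.mulVec x`, viewed as a vector of `EuclideanSpace ℝ (Fin d)`. -/
noncomputable def mulVecEuc {d n : ℕ} (A : Matrix (Fin d) (Fin n) ℝ) (x : Fin n → ℝ) :
    EuclideanSpace ℝ (Fin d) :=
  (WithLp.equiv 2 (Fin d → ℝ)).symm (A.mulVec x)

/-- Correctness of the rand_cholQR least squares solver in exact arithmetic: with `A` of full
column rank, `R₀` invertible upper triangular, `Q₀ = A·R₀⁻¹`, `R₁` invertible upper triangular
with `R₁ᵀR₁ = Q₀ᵀQ₀`, and `R = R₁·R₀`, the vector `x = R⁻¹·R₁⁻ᵀ·Q₀ᵀ·b` satisfies the normal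
equations `AᵀA·x = Aᵀb`, hence minimizes `‖b − Aw‖₂` over `w ∈ ℝ^n`. -/
theorem countsketch_stmt13 {d n : ℕ}
    (A : Matrix (Fin d) (Fin n) ℝ) (hA : Function.Injective A.mulVec)
    (b : EuclideanSpace ℝ (Fin d))
    (R₀ : Matrix (Fin n) (Fin n) ℝ)
    (hR₀tri : R₀.BlockTriangular (id : Fin n → Fin n)) (hR₀inv : IsUnit R₀)
    (Q₀ : Matrix (Fin d) (Fin n) ℝ) (hQ₀ : Q₀ = A * R₀⁻¹)
    (R₁ : Matrix (Fin n) (Fin n) ℝ)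
    (hR₁tri : R₁.BlockTriangular (id : Fin n → Fin n)) (hR₁inv : IsUnit R₁)
    (hChol : R₁ᵀ * R₁ = Q₀ᵀ * Q₀)
    (R : Matrix (Fin n) (Fin n) ℝ) (hR : R = R₁ * R₀)
    (x : Fin n → ℝ)
    (hx : x = R⁻¹.mulVec ((R₁ᵀ)⁻¹.mulVec (Q₀ᵀ.mulVec (WithLp.equiv 2 (Fin d → ℝ) b)))) :
    (Aᵀ * A).mulVec x = Aᵀ.mulVec (WithLp.equiv 2 (Fin d → ℝ) b) ∧
    ∀ w : Fin n → ℝ, ‖b - mulVecEuc A x‖ ≤ ‖b - mulVecEuc A w‖ := by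
  set b' : Fin d → ℝ := WithLp.equiv 2 (Fin d → ℝ) b with hb'
  -- invertibility facts
  have hR₀det : IsUnit R₀.det := (Matrix.isUnit_iff_isUnit_det R₀).mp hR₀inv
  have hR₁det : IsUnit R₁.det := (Matrix.isUnit_iff_isUnit_det R₁).mp hR₁inv
  have hRinv : IsUnit R := hR ▸ hR₁inv.mul hR₀inv
  have hRdet : IsUnit R.det := (Matrix.isUnit_iff_isUnit_det R).mp hRinv
  have hR₁tdet : IsUnit (R₁ᵀ).det := by rwa [Matrix.det_transpose]
  -- A = Q₀ * R₀
  have hAfac : A = Q₀ * R₀ := by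
    rw [hQ₀, Matrix.mul_assoc, Matrix.nonsing_inv_mul _ hR₀det, Matrix.mul_one]
  -- AᵀA = Rᵀ R
  have hAtA : Aᵀ * A = Rᵀ * R := by
    rw [hAfac, Matrix.transpose_mul, Matrix.mul_assoc, ← Matrix.mul_assoc Q₀ᵀ Q₀ R₀,
      ← hChol, hR, Matrix.transpose_mul]
    simp [Matrix.mul_assoc]
  have h1 : R * R⁻¹ = 1 := Matrix.mul_nonsing_inv _ hRdet
  have h2 : R₁ᵀ * (R₁ᵀ)⁻¹ = 1 := Matrix.mul_nonsing_inv _ hR₁tdet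
  -- the key matrix identity:  Rᵀ * R * R⁻¹ * R₁ᵀ⁻¹ * Q₀ᵀ = Aᵀ
  have hkey : Rᵀ * R * R⁻¹ * (R₁ᵀ)⁻¹ * Q₀ᵀ = Aᵀ := by
    calc Rᵀ * R * R⁻¹ * (R₁ᵀ)⁻¹ * Q₀ᵀ
        = Rᵀ * (R * R⁻¹) * ((R₁ᵀ)⁻¹ * Q₀ᵀ) := by simp [Matrix.mul_assoc]
      _ = (R₁ * R₀)ᵀ * ((R₁ᵀ)⁻¹ * Q₀ᵀ) := by rw [h1, Matrix.mul_one, hR]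
      _ = R₀ᵀ * ((R₁ᵀ * (R₁ᵀ)⁻¹) * Q₀ᵀ) := by
          rw [Matrix.transpose_mul]; simp [Matrix.mul_assoc]
      _ = R₀ᵀ * Q₀ᵀ := by rw [h2, Matrix.one_mul]
      _ = Aᵀ := by rw [← Matrix.transpose_mul, ← hAfac]
  -- normal equations
  have hnormal : (Aᵀ * A).mulVec x = Aᵀ.mulVec b' := by
    rw [hx, hAtA, Matrix.mulVec_mulVec, Matrix.mulVec_mulVec, Matrix.mulVec_mulVec, hkey]
  refine ⟨hnormal, fun w => ?_⟩
  -- residual orthogonality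
  have horth : ∀ v : Fin n → ℝ,
      inner ℝ (b - mulVecEuc A x) (mulVecEuc A v) = (0 : ℝ) := by
    intro v
    have h1 : Aᵀ.mulVec (b' - A.mulVec x) = 0 := by
      rw [Matrix.mulVec_sub, Matrix.mulVec_mulVec, hnormal, sub_self]
    have h2 : inner ℝ (b - mulVecEuc A x) (mulVecEuc A v)
        = (b' - A.mulVec x) ⬝ᵥ A.mulVec v := by
      rw [EuclideanSpace.inner_eq_star_dotProduct]
      simp [mulVecEuc, dotProduct, mul_comm, hb', sub_mul]
    rw [h2, dotProduct_mulVec, ← Matrix.mulVec_transpose, h1]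
    simp
  have hdecomp : b - mulVecEuc A w = (b - mulVecEuc A x) + mulVecEuc A (x - w) := by
    have : mulVecEuc A (x - w) = mulVecEuc A x - mulVecEuc A w := by
      simp [mulVecEuc, Matrix.mulVec_sub]
    rw [this]; abel
  rw [hdecomp]
  have := horth (x - w)
  calc ‖b - mulVecEuc A x‖
      ≤ Real.sqrt (‖b - mulVecEuc A x‖ ^ 2 + ‖mulVecEuc A (x - w)‖ ^ 2) := by
        rw [show ‖b - mulVecEuc A x‖ = Real.sqrt (‖b - mulVecEuc A x‖ ^ 2) by
          rw [Real.sqrt_sq (norm_nonneg _)]]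
        apply Real.sqrt_le_sqrt
        nlinarith [sq_nonneg ‖mulVecEuc A (x - w)‖, Real.sq_sqrt (sq_nonneg ‖b - mulVecEuc A x‖)]
    _ = ‖(b - mulVecEuc A x) + mulVecEuc A (x - w)‖ := by
        rw [← Real.sqrt_sq (norm_nonneg ((b - mulVecEuc A x) + mulVecEuc A (x - w)))]
        congr 1
        rw [norm_add_sq_real, this]; ring
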